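/- arXiv:1108.5266 — 2 statements merged into one kernel-verified Lean document; each statement's English description precedes it below -/
import Mathlib

section
/- Let ρ₁ < … < ρ_L be positive reals and N₁,…,N_L positive integers with ΣNᵣ = N. Define g(m) = −2/m³ + (1/M)Σᵣ 2Nᵣ ρᵣ³/(1 + ρᵣ m)³ for m in the open interval (−1/ρᵢ, −1/ρᵢ₊₁) (with 1 ≤ i ≤ L−1). Then g has at least one zero in this interval. -/
open Set Filter Topology

/-- The function g(m) = −2/m³ + (1/M)∑ᵣ 2Nᵣρᵣ³/(1+ρᵣm)³ has at least one zero in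
each interval (−1/ρᵢ, −1/ρᵢ₊₁). -/
theorem stmt_4 (L N M : ℕ) (hM : 0 < M)
    (ρ : Fin L → ℝ) (hρpos : ∀ r, 0 < ρ r) (hmono : StrictMono ρ)
    (Nr : Fin L → ℕ) (hNr : ∀ r, 0 < Nr r) (hsum : ∑ r, Nr r = N)
    (i j : Fin L) (hij : (i : ℕ) + 1 = (j : ℕ)) :
    ∃ m ∈ Set.Ioo (-1 / ρ i) (-1 / ρ j),
      -2 / m ^ 3 + (1 / (M : ℝ)) * ∑ r, 2 * (Nr r : ℝ) * (ρ r) ^ 3 / (1 + ρ r * m) ^ 3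
        = 0 := by
  set F : ℝ → ℝ := fun m =>
    -2 / m ^ 3 + (1 / (M : ℝ)) * ∑ r, 2 * (Nr r : ℝ) * (ρ r) ^ 3 / (1 + ρ r * m) ^ 3 with hF
  have hiltj : i < j := by
    rw [Fin.lt_def]; omega
  have hρij : ρ i < ρ j := hmono hiltj
  set l : ℝ := -1 / ρ i with hl
  set rR : ℝ := -1 / ρ j with hrR
  have hlr : l < rR := by
    rw [hl, hrR, neg_div, neg_div, neg_lt_neg_iff]
    exact one_div_lt_one_div_of_lt (hρpos i) hρij
  have hrneg : rR < 0 := by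
    rw [hrR, neg_div]
    exact neg_neg_of_pos (one_div_pos.2 (hρpos j))
  -- each ρ r is either ≤ ρ i or ≥ ρ j
  have hcase : ∀ r : Fin L, ρ r ≤ ρ i ∨ ρ j ≤ ρ r := by
    intro r
    rcases le_or_gt (r : ℕ) (i : ℕ) with h | h
    · exact Or.inl (hmono.monotone (by rwa [Fin.le_def]))
    · exact Or.inr (hmono.monotone (by rw [Fin.le_def]; omega))
  -- sign of denominators on the interval
  have hposd : ∀ r : Fin L, ρ r ≤ ρ i → ∀ m ∈ Ioo l rR, 0 < 1 + ρ r * m := by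
    intro r hr m hm
    have hm1 : l < m := hm.1
    have hm0 : m < 0 := hm.2.trans hrneg
    rw [hl, div_lt_iff₀ (hρpos i)] at hm1
    nlinarith [mul_nonneg (sub_nonneg.2 hr) (neg_nonneg.2 hm0.le)]
  have hnegd : ∀ r : Fin L, ρ j ≤ ρ r → ∀ m ∈ Ioo l rR, 1 + ρ r * m < 0 := by
    intro r hr m hm
    have hm2 : m < rR := hm.2
    have hm0 : m < 0 := hm2.trans hrneg
    rw [hrR, lt_div_iff₀ (hρpos j)] at hm2
    nlinarith [mul_nonneg (sub_nonneg.2 hr) (neg_nonneg.2 hm0.le)]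
  have hne : ∀ r : Fin L, ∀ m ∈ Ioo l rR, (1 + ρ r * m) ≠ 0 := by
    intro r m hm
    rcases hcase r with h | h
    · exact (hposd r h m hm).ne'
    · exact (hnegd r h m hm).ne
  have hmne : ∀ m ∈ Ioo l rR, m ≠ 0 := fun m hm => (hm.2.trans hrneg).ne
  -- continuity on the interval
  have hcont : ContinuousOn F (Ioo l rR) := by
    apply ContinuousOn.add
    · exact continuousOn_const.div (continuousOn_pow 3) fun m hm =>
        pow_ne_zero 3 (hmne m hm)
    · refine continuousOn_const.mul (continuousOn_finset_sum _ fun r _ => ?_)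
      exact continuousOn_const.div
        (((continuous_const.add (continuous_const.mul continuous_id)).pow 3).continuousOn)
        (fun m hm => pow_ne_zero 3 (hne r m hm))
  -- decomposition near an endpoint k ∈ {i, j}
  have hdecomp : ∀ k : Fin L, ∀ m ∈ Ioo l rR,
      F m = (2 * (Nr k : ℝ) * ρ k ^ 3 / M) * ((1 + ρ k * m) ^ 3)⁻¹ +
        (-2 / m ^ 3 + (1 / (M : ℝ)) *
          ∑ r ∈ Finset.univ.erase k, 2 * (Nr r : ℝ) * (ρ r) ^ 3 / (1 + ρ r * m) ^ 3) := by
    intro k m hm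
    simp only [hF]
    rw [← Finset.add_sum_erase _ _ (Finset.mem_univ k)]
    ring
  -- auxiliary: continuity of the "rest" G_k at endpoint e, provided denominators nonzero there
  have hGcont : ∀ k : Fin L, ∀ e : ℝ, e ≠ 0 → (∀ r : Fin L, r ≠ k → 1 + ρ r * e ≠ 0) →
      ContinuousAt (fun m => -2 / m ^ 3 + (1 / (M : ℝ)) *
        ∑ r ∈ Finset.univ.erase k, 2 * (Nr r : ℝ) * (ρ r) ^ 3 / (1 + ρ r * m) ^ 3) e := by
    intro k e he hre
    apply ContinuousAt.add
    · exact ContinuousAt.div continuousAt_const (continuousAt_pow e 3) (pow_ne_zero 3 he)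
    · refine continuousAt_const.mul ?_
      refine tendsto_finset_sum _ fun r hr => ?_
      refine ContinuousAt.div continuousAt_const
        (((continuous_const.add (continuous_const.mul continuous_id)).pow 3).continuousAt) ?_
      exact pow_ne_zero 3 (hre r (Finset.ne_of_mem_erase hr))
  have hlne0 : l ≠ 0 := by
    have : l < 0 := hlr.trans hrneg
    exact this.ne
  have hd0 : ∀ r : Fin L, ∀ e : ℝ, ρ r * e ≠ -1 → 1 + ρ r * e ≠ 0 := by
    intro r e h h0
    apply h; linarith
  -- the endpoint denominator vanishes
  have hdi : 1 + ρ i * l = 0 := by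
    rw [hl]; field_simp [(hρpos i).ne']; norm_num
  have hdj : 1 + ρ j * rR = 0 := by
    rw [hrR]; field_simp [(hρpos j).ne']; norm_num
  -- denominators at l for r ≠ i are nonzero
  have hdl : ∀ r : Fin L, r ≠ i → 1 + ρ r * l ≠ 0 := by
    intro r hr h0
    have : ρ r = ρ i := by
      have hne0 := (hρpos i).ne'
      have key : ρ i * (1 + ρ r * l) = ρ i - ρ r := by rw [hl]; field_simp; ring
      rw [h0, mul_zero] at key
      linarith
    exact hr (hmono.injective this)
  have hdr : ∀ r : Fin L, r ≠ j → 1 + ρ r * rR ≠ 0 := by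
    intro r hr h0
    have : ρ r = ρ j := by
      have hne0 := (hρpos j).ne'
      have key : ρ j * (1 + ρ r * rR) = ρ j - ρ r := by rw [hrR]; field_simp; ring
      rw [h0, mul_zero] at key
      linarith
    exact hr (hmono.injective this)
  have hMpos : (0:ℝ) < M := Nat.cast_pos.2 hM
  -- F tends to +∞ at the left endpoint
  have hTop : Tendsto F (𝓝[Ioo l rR] l) atTop := by
    have h1 : Tendsto (fun m => (1 + ρ i * m) ^ 3) (𝓝[Ioo l rR] l) (𝓝[>] 0) := by
      rw [tendsto_nhdsWithin_iff]
      constructor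
      · have : ContinuousAt (fun m => (1 + ρ i * m) ^ 3) l :=
          ((continuous_const.add (continuous_const.mul continuous_id)).pow 3).continuousAt
        have := this.tendsto.mono_left (nhdsWithin_le_nhds (s := Ioo l rR))
        simpa [hdi] using this
      · filter_upwards [self_mem_nhdsWithin] with m hm
        exact pow_pos (hposd i le_rfl m hm) 3
    have h2 : Tendsto (fun m => ((1 + ρ i * m) ^ 3)⁻¹) (𝓝[Ioo l rR] l) atTop :=
      h1.inv_tendsto_nhdsGT_zero
    have hc : (0:ℝ) < 2 * (Nr i : ℝ) * ρ i ^ 3 / M := by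
      have := hNr i; have := hρpos i; positivity
    have h3 : Tendsto (fun m => (2 * (Nr i : ℝ) * ρ i ^ 3 / M) * ((1 + ρ i * m) ^ 3)⁻¹)
        (𝓝[Ioo l rR] l) atTop := (tendsto_const_mul_atTop_of_pos hc).2 h2
    have h4 := (hGcont i l hlne0 (fun r hr => hdl r hr)).tendsto.mono_left
      (nhdsWithin_le_nhds (s := Ioo l rR))
    refine (h3.atTop_add h4).congr' ?_
    filter_upwards [self_mem_nhdsWithin] with m hm
    exact (hdecomp i m hm).symm
  -- F tends to -∞ at the right endpoint
  have hBot : Tendsto F (𝓝[Ioo l rR] rR) atBot := by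
    have h1 : Tendsto (fun m => -((1 + ρ j * m) ^ 3)) (𝓝[Ioo l rR] rR) (𝓝[>] 0) := by
      rw [tendsto_nhdsWithin_iff]
      constructor
      · have : ContinuousAt (fun m => -((1 + ρ j * m) ^ 3)) rR :=
          (((continuous_const.add (continuous_const.mul continuous_id)).pow 3).neg).continuousAt
        have := this.tendsto.mono_left (nhdsWithin_le_nhds (s := Ioo l rR))
        simpa [hdj] using this
      · filter_upwards [self_mem_nhdsWithin] with m hm
        have : (1 + ρ j * m) ^ 3 < 0 := Odd.pow_neg (by decide) (hnegd j le_rfl m hm)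
        simpa using this
    have h2 : Tendsto (fun m => (-((1 + ρ j * m) ^ 3))⁻¹) (𝓝[Ioo l rR] rR) atTop :=
      h1.inv_tendsto_nhdsGT_zero
    have h2' : Tendsto (fun m => ((1 + ρ j * m) ^ 3)⁻¹) (𝓝[Ioo l rR] rR) atBot := by
      have h := tendsto_neg_atTop_atBot.comp h2
      refine h.congr fun m => ?_
      simp [inv_neg]
    have hc : (0:ℝ) < 2 * (Nr j : ℝ) * ρ j ^ 3 / M := by
      have := hNr j; have := hρpos j; positivity
    have h3 : Tendsto (fun m => (2 * (Nr j : ℝ) * ρ j ^ 3 / M) * ((1 + ρ j * m) ^ 3)⁻¹)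
        (𝓝[Ioo l rR] rR) atBot := (tendsto_const_mul_atBot_of_pos hc).2 h2'
    have h4 := (hGcont j rR hrneg.ne (fun r hr => hdr r hr)).tendsto.mono_left
      (nhdsWithin_le_nhds (s := Ioo l rR))
    refine (h3.atBot_add h4).congr' ?_
    filter_upwards [self_mem_nhdsWithin] with m hm
    exact (hdecomp j m hm).symm
  -- pick a point near the left end where F > 0
  have hnbl : (𝓝[Ioo l rR] l).NeBot := by
    rw [nhdsWithin_Ioo_eq_nhdsGT hlr]
    infer_instance
  have hnbr : (𝓝[Ioo l rR] rR).NeBot := by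
    rw [nhdsWithin_Ioo_eq_nhdsLT hlr]
    infer_instance
  obtain ⟨a, ha, haI⟩ :=
    ((hTop.eventually_gt_atTop 0).and eventually_mem_nhdsWithin).exists
  -- pick a point near the right end where F < 0, above a
  obtain ⟨b, hb, hbI, hab⟩ :=
    ((hBot.eventually_lt_atBot 0).and (eventually_mem_nhdsWithin.and
      ((eventually_gt_nhds haI.2).filter_mono nhdsWithin_le_nhds))).exists
  -- apply the intermediate value theorem on [a, b]
  have hIcc : Icc a b ⊆ Ioo l rR := fun x hx =>
    ⟨haI.1.trans_le hx.1, lt_of_le_of_lt hx.2 hbI.2⟩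
  have := intermediate_value_Icc' hab.le (hcont.mono hIcc)
  have h0 : (0:ℝ) ∈ Icc (F b) (F a) := ⟨hb.le, ha.le⟩
  obtain ⟨c, hcI, hc0⟩ := this h0
  exact ⟨c, hIcc hcI, hc0⟩
end

section
/- Suppose m is holomorphic on a neighborhood of a closed contour γ and its interior, and ξ is a point inside γ with m(ξ) = c ≠ 0 where the first nonvanishing derivative of m − c at ξ has order k ≥ 1. Then the residue at z₁ = ξ of g(z₁) = m′(z₁)·m′(z₂)/((m(z₁) − c)²·m(z₁)·m(z₂)) (with z₂ fixed, m(z₂) = c, m′(z₂) ≠ 0) equals −k·m′(z₂)/m(z₂)³. -/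
open Metric Nat

/-- At a point ξ where m(ξ) = c = m(z₂) ≠ 0 with first nonvanishing derivative of
m − c of order k, the residue of g(z₁) = m′(z₁)m′(z₂)/((m(z₁)−c)²m(z₁)m(z₂))
equals −k·m′(z₂)/m(z₂)³, expressed via small circle integrals around ξ. -/
theorem stmt_8 (m : ℂ → ℂ) (U : Set ℂ) (hU : IsOpen U) (ξ z₂ : ℂ) (c : ℂ)
    (hξU : ξ ∈ U) (hz₂U : z₂ ∈ U) (hm : DifferentiableOn ℂ m U)
    (hc : m ξ = c) (hc0 : c ≠ 0) (k : ℕ) (hk : 1 ≤ k)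
    (hvanish : ∀ j, 1 ≤ j → j < k → iteratedDeriv j m ξ = 0)
    (hnonvanish : iteratedDeriv k m ξ ≠ 0)
    (hz2 : m z₂ = c) (hz2' : deriv m z₂ ≠ 0) (hne : z₂ ≠ ξ)
    (g : ℂ → ℂ)
    (hg : ∀ z₁, g z₁ = deriv m z₁ * deriv m z₂
        / ((m z₁ - c) ^ 2 * m z₁ * m z₂)) :
    ∃ ε₀ > (0 : ℝ), ∀ ε ∈ Set.Ioo (0 : ℝ) ε₀,
      (2 * Real.pi * Complex.I)⁻¹ * (∮ z in C(ξ, ε), g z)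
        = -(k : ℂ) * deriv m z₂ / (m z₂) ^ 3 := by
  set B := deriv m z₂ with hB
  have hmU : AnalyticOnNhd ℂ m U := hm.analyticOnNhd hU
  set f : ℂ → ℂ := fun z => m z - c with hfdef
  have hfa : AnalyticAt ℂ f ξ := (hmU ξ hξU).sub analyticAt_const
  obtain ⟨p, hp⟩ := hfa
  have hp' := hp
  obtain ⟨R0, hpb⟩ := hp'
  have hcoeff : ∀ n : ℕ, (n ! : ℂ) * p.coeff n = iteratedDeriv n f ξ := by
    intro n
    have h1 := hpb.factorial_smul (1 : ℂ) n
    rw [FormalMultilinearSeries.apply_eq_pow_smul_coeff] at h1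
    simp only [one_pow, one_smul, nsmul_eq_mul] at h1
    rw [iteratedDeriv_eq_iteratedFDeriv, ← h1]
  have hderiv_f : ∀ n : ℕ, 1 ≤ n → iteratedDeriv n f ξ = iteratedDeriv n m ξ := by
    intro n hn
    obtain ⟨j, rfl⟩ : ∃ j, n = j + 1 := ⟨n - 1, (Nat.succ_pred_eq_of_pos hn).symm⟩
    have hd : deriv f = deriv m := by
      funext z
      exact deriv_sub_const c
    rw [iteratedDeriv_succ', iteratedDeriv_succ', hd]
  have h0 : p.coeff 0 = 0 := by
    have h1 := hcoeff 0
    simpa [hfdef, hc] using h1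
  have hvan : ∀ j, j < k → p j = 0 := by
    intro j hj
    rw [← FormalMultilinearSeries.coeff_eq_zero]
    rcases Nat.eq_zero_or_pos j with rfl | hj1
    · exact h0
    · have h1 := hcoeff j
      rw [hderiv_f j hj1, hvanish j hj1 hj] at h1
      have hfac : (j ! : ℂ) ≠ 0 := by exact_mod_cast Nat.factorial_ne_zero j
      exact (mul_eq_zero.mp h1).resolve_left hfac
  have hk0 : p k ≠ 0 := by
    intro hzero
    have hz2 : p.coeff k = 0 := FormalMultilinearSeries.coeff_eq_zero.mpr hzero
    apply hnonvanish
    rw [← hderiv_f k hk, ← hcoeff k, hz2, mul_zero]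
  have hpne : p ≠ 0 := FormalMultilinearSeries.ne_iff.mpr ⟨k, hk0⟩
  have hord : p.order = k := by
    rcases lt_trichotomy p.order k with hlt | heq | hgt
    · exact absurd (hvan _ hlt) (p.apply_order_ne_zero hpne)
    · exact heq
    · exact absurd (p.apply_eq_zero_of_lt_order hgt) hk0
  set h : ℂ → ℂ := (Function.swap dslope ξ)^[k] f with hhdef
  have hh_an : AnalyticAt ℂ h ξ := ⟨_, hp.has_fpower_series_iterate_dslope_fslope k⟩
  have hh_ne : h ξ ≠ 0 := by
    have h2 := hp.iterate_dslope_fslope_ne_zero hpne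
    rwa [hord] at h2
  have hfac : ∀ᶠ z in nhds ξ, f z = (z - ξ) ^ k * h z := by
    have h3 := hp.eq_pow_order_mul_iterate_dslope
    rw [hord] at h3
    filter_upwards with z
    simpa [smul_eq_mul] using h3 z
  obtain ⟨k', rfl⟩ : ∃ k'' : ℕ, k = k'' + 1 := ⟨k - 1, (Nat.succ_pred_eq_of_pos hk).symm⟩
  have hev : ∀ᶠ z in nhds ξ,
      (f z = (z - ξ) ^ (k' + 1) * h z ∧ AnalyticAt ℂ h z ∧ h z ≠ 0 ∧ m z ≠ 0 ∧ z ∈ U) := by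
    have e2 := hh_an.eventually_analyticAt
    have e3 : ∀ᶠ z in nhds ξ, h z ≠ 0 := hh_an.continuousAt.eventually_ne hh_ne
    have e4 : ∀ᶠ z in nhds ξ, m z ≠ 0 := by
      have hcont : ContinuousAt m ξ := (hm.differentiableAt (hU.mem_nhds hξU)).continuousAt
      exact hcont.eventually_ne (by rw [hc]; exact hc0)
    have e5 : ∀ᶠ z in nhds ξ, z ∈ U := hU.mem_nhds hξU
    filter_upwards [hfac, e2, e3, e4, e5] with z h1 h2 h3 h4 h5 using ⟨h1, h2, h3, h4, h5⟩
  obtain ⟨r, hr0, hball⟩ := Metric.eventually_nhds_iff_ball.mp hev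
  refine ⟨r, hr0, ?_⟩
  rintro ε ⟨hε0, hεr⟩
  have hε0' : (0:ℝ) ≤ ε := hε0.le
  have hsub : closedBall ξ ε ⊆ ball ξ r := closedBall_subset_ball hεr
  have hsph : sphere ξ ε ⊆ ball ξ r := fun z hz => hsub (sphere_subset_closedBall hz)
  -- pointwise facts on the ball
  have HU : ∀ z ∈ ball ξ r, z ∈ U := fun z hz => (hball z hz).2.2.2.2
  have Hfz : ∀ z ∈ ball ξ r, f z = (z - ξ) ^ (k' + 1) * h z := fun z hz => (hball z hz).1
  have Hh : ∀ z ∈ ball ξ r, AnalyticAt ℂ h z := fun z hz => (hball z hz).2.1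
  have Hhne : ∀ z ∈ ball ξ r, h z ≠ 0 := fun z hz => (hball z hz).2.2.1
  have Hmne : ∀ z ∈ ball ξ r, m z ≠ 0 := fun z hz => (hball z hz).2.2.2.1
  have Hm : ∀ z ∈ ball ξ r, HasDerivAt m (deriv m z) z := fun z hz =>
    (hm.differentiableAt (hU.mem_nhds (HU z hz))).hasDerivAt
  have Hf : ∀ z ∈ ball ξ r, HasDerivAt f (deriv m z) z := fun z hz => (Hm z hz).sub_const c
  have Hderiv : ∀ z ∈ ball ξ r,
      deriv m z = ((k' + 1 : ℕ) : ℂ) * (z - ξ) ^ k' * h z + (z - ξ) ^ (k' + 1) * deriv h z := by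
    intro z hz
    have hopen : ball ξ r ∈ nhds z := isOpen_ball.mem_nhds hz
    have heq : f =ᶠ[nhds z] fun w => (w - ξ) ^ (k' + 1) * h w :=
      Filter.eventuallyEq_of_mem hopen fun w hw => Hfz w hw
    have h1 : HasDerivAt (fun w => (w - ξ) ^ (k' + 1)) (((k' + 1 : ℕ) : ℂ) * (z - ξ) ^ ((k' + 1) - 1) * 1) z :=
      ((hasDerivAt_id z).sub_const ξ).pow (k' + 1)
    have hP : HasDerivAt (fun w => (w - ξ) ^ (k' + 1) * h w)
        (((k' + 1 : ℕ) : ℂ) * (z - ξ) ^ ((k' + 1) - 1) * 1 * h z + (z - ξ) ^ (k' + 1) * deriv h z) z :=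
      h1.mul ((Hh z hz).differentiableAt.hasDerivAt)
    have hF := hP.congr_of_eventuallyEq heq
    have := (Hf z hz).unique hF
    simpa using this
  -- nonvanishing of f on the sphere
  have hzne : ∀ z ∈ sphere ξ ε, z ≠ ξ := by
    intro z hz hzz
    rw [mem_sphere, hzz, _root_.dist_self] at hz
    exact hε0.ne' hz.symm
  have hfne : ∀ z ∈ sphere ξ ε, f z ≠ 0 := by
    intro z hz
    have hzξ : z ≠ ξ := hzne z hz
    rw [Hfz z (hsph hz)]
    exact mul_ne_zero (pow_ne_zero _ (sub_ne_zero.mpr hzξ)) (Hhne z (hsph hz))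
  -- analytic functions on the ball
  have hmA : AnalyticOnNhd ℂ m (ball ξ r) := fun z hz => hmU z (HU z hz)
  have hdmA : AnalyticOnNhd ℂ (deriv m) (ball ξ r) := hmA.deriv
  have hhA : AnalyticOnNhd ℂ h (ball ξ r) := fun z hz => Hh z hz
  have hdhA : AnalyticOnNhd ℂ (deriv h) (ball ξ r) := hhA.deriv
  have hfA : AnalyticOnNhd ℂ f (ball ξ r) := fun z hz => (hmA z hz).sub analyticAt_const
  -- the three pieces
  set T1 : ℂ → ℂ := fun z => B / c ^ 2 * (deriv m z / f z ^ 2) with hT1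
  set T2 : ℂ → ℂ := fun z => B / c ^ 3 * (deriv m z / f z) with hT2
  set T3 : ℂ → ℂ := fun z => B / c ^ 3 * (deriv m z / m z) with hT3
  have hgW : Set.EqOn g (fun z => T1 z - (T2 z - T3 z)) (sphere ξ ε) := by
    intro z hz
    have h1 : f z ≠ 0 := hfne z hz
    have h2 : m z ≠ 0 := Hmne z (hsph hz)
    have key : ∀ a b d : ℂ, a ≠ 0 → b ≠ 0 → b = a + c →
        d * B / (a ^ 2 * b * c) = B / c ^ 2 * (d / a ^ 2) - (B / c ^ 3 * (d / a) - B / c ^ 3 * (d / b)) := by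
      intro a b d ha hb hab
      subst hab
      have hb' : a + c ≠ 0 := hb
      field_simp [ha, hb', hc0]
      ring
    simp only [hT1, hT2, hT3]
    rw [hg z, hz2]
    have hfz' : f z = m z - c := rfl
    rw [hfz']
    exact key (m z - c) (m z) (deriv m z) h1 h2 (by ring)
  -- continuity, integrability
  have hcontdm : ContinuousOn (deriv m) (sphere ξ ε) := (hdmA.continuousOn).mono hsph
  have hcontf : ContinuousOn f (sphere ξ ε) := (hfA.continuousOn).mono hsph
  have hcontm : ContinuousOn m (sphere ξ ε) := (hmA.continuousOn).mono hsph
  have hT1int : CircleIntegrable T1 ξ ε := by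
    apply ContinuousOn.circleIntegrable hε0'
    exact continuousOn_const.mul (hcontdm.div (hcontf.pow 2)
      fun z hz => pow_ne_zero 2 (hfne z hz))
  have hT2int : CircleIntegrable T2 ξ ε := by
    apply ContinuousOn.circleIntegrable hε0'
    exact continuousOn_const.mul (hcontdm.div hcontf fun z hz => hfne z hz)
  have hT3int : CircleIntegrable T3 ξ ε := by
    apply ContinuousOn.circleIntegrable hε0'
    exact continuousOn_const.mul (hcontdm.div hcontm fun z hz => Hmne z (hsph hz))
  -- I1 = 0 by FTC
  have hT23int : CircleIntegrable (fun z => T2 z - T3 z) ξ ε := by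
    apply ContinuousOn.circleIntegrable hε0'
    exact ((continuousOn_const.mul (hcontdm.div hcontf fun z hz => hfne z hz)).sub
      (continuousOn_const.mul (hcontdm.div hcontm fun z hz => Hmne z (hsph hz))))
  have hI1 : (∮ z in C(ξ, ε), T1 z) = 0 := by
    refine circleIntegral.integral_eq_zero_of_hasDerivWithinAt
      (f := fun w => -(B / c ^ 2) * (f w)⁻¹) hε0' ?_
    intro z hz
    have h1 : f z ≠ 0 := hfne z hz
    have hd : HasDerivAt (fun w => -(B / c ^ 2) * (f w)⁻¹) (T1 z) z := by
      have h2 := HasDerivAt.const_mul (-(B / c ^ 2)) (((Hf z (hsph hz)).inv h1))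
      convert h2 using 1
      show B / c ^ 2 * (deriv m z / f z ^ 2) = _
      ring
      all_goals rfl
    exact hd.hasDerivWithinAt
  -- I3 = 0 by Cauchy-Goursat
  have hT3A : AnalyticOnNhd ℂ T3 (ball ξ r) := fun z hz =>
    analyticAt_const.mul ((hdmA z hz).div (hmA z hz) (Hmne z hz))
  have hI3 : (∮ z in C(ξ, ε), T3 z) = 0 := by
    refine Complex.circleIntegral_eq_zero_of_differentiable_on_off_countable hε0'
      Set.countable_empty ?_ ?_
    · exact (hT3A.continuousOn).mono hsub
    · intro z hz
      exact (hT3A z (hsub (ball_subset_closedBall hz.1))).differentiableAt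
  -- I2
  set Y : ℂ → ℂ := fun z => -(B / c ^ 3) * (deriv h z / h z) with hY
  have hYA : AnalyticOnNhd ℂ Y (ball ξ r) := fun z hz =>
    analyticAt_const.mul ((hdhA z hz).div (hhA z hz) (Hhne z hz))
  have hIY : (∮ z in C(ξ, ε), Y z) = 0 := by
    refine Complex.circleIntegral_eq_zero_of_differentiable_on_off_countable hε0'
      Set.countable_empty ?_ ?_
    · exact (hYA.continuousOn).mono hsub
    · intro z hz
      exact (hYA z (hsub (ball_subset_closedBall hz.1))).differentiableAt
  have hYint : CircleIntegrable Y ξ ε :=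
    ContinuousOn.circleIntegrable hε0' ((hYA.continuousOn).mono hsph)
  have hXint : CircleIntegrable (fun z => B / c ^ 3 * ((k' + 1 : ℕ) : ℂ) * (z - ξ)⁻¹) ξ ε := by
    apply ContinuousOn.circleIntegrable hε0'
    refine continuousOn_const.mul (ContinuousOn.inv₀ ((continuousOn_id.sub continuousOn_const))
      fun z hz => sub_ne_zero.mpr (hzne z hz))
  have hT2eq : Set.EqOn T2 (fun z => B / c ^ 3 * ((k' + 1 : ℕ) : ℂ) * (z - ξ)⁻¹ - Y z) (sphere ξ ε) := by
    intro z hz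
    have hzball := hsph hz
    have h1 : f z ≠ 0 := hfne z hz
    have hzξ : (z - ξ) ≠ 0 := sub_ne_zero.mpr (hzne z hz)
    have h3 : h z ≠ 0 := Hhne z hzball
    have key2 : ∀ u w y d : ℂ, u ≠ 0 → w ≠ 0 → y ≠ 0 →
        B / c ^ 3 * ((((k' + 1 : ℕ) : ℂ) * u * y + u * w * d) / (u * w * y))
          = B / c ^ 3 * ((k' + 1 : ℕ) : ℂ) * w⁻¹ - -(B / c ^ 3) * (d / y) := by
      intro u w y d hu hw hy
      field_simp
      ring
    simp only [hT2, hY]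
    rw [Hderiv z hzball, Hfz z hzball]
    have hpow : (z - ξ) ^ (k' + 1) = (z - ξ) ^ k' * (z - ξ) := pow_succ _ _
    rw [hpow]
    have hzp : (z - ξ) ^ k' ≠ 0 := pow_ne_zero _ hzξ
    have := key2 ((z - ξ) ^ k') (z - ξ) (h z) (deriv h z) hzp hzξ h3
    convert this using 2
  have hI2 : (∮ z in C(ξ, ε), T2 z) = B / c ^ 3 * ((k' + 1 : ℕ) : ℂ) * (2 * Real.pi * Complex.I) := by
    rw [circleIntegral.integral_congr hε0' hT2eq,
      circleIntegral.integral_sub hXint hYint, hIY, sub_zero]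
    rw [circleIntegral.integral_const_mul, circleIntegral.integral_sub_center_inv ξ hε0.ne']
  -- put everything together
  have hInt : (∮ z in C(ξ, ε), g z) = -(B / c ^ 3 * ((k' + 1 : ℕ) : ℂ) * (2 * Real.pi * Complex.I)) := by
    rw [circleIntegral.integral_congr hε0' hgW,
      circleIntegral.integral_sub hT1int hT23int,
      circleIntegral.integral_sub hT2int hT3int, hI1, hI2, hI3, sub_zero, zero_sub]
  rw [hInt, hz2]
  have hpi : (2 * (Real.pi : ℂ) * Complex.I) ≠ 0 := by
    simp [Real.pi_ne_zero, Complex.I_ne_zero]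
  field_simp
end
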